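/- Let m be a real random variable with law N(0, σ_m²) where σ_m² > 0, on a probability space (Ω, ℱ, ℙ). For a measurable encoder γ : ℝ → ℝ let u_γ = 𝔼[m | σ(γ(m))] and J(γ) = 𝔼[(a·m − b − u_γ)²]. If a < 1/2, then the constant encoder γ₀ ≡ 0 satisfies J(γ₀) ≤ J(γ) for every measurable γ : ℝ → ℝ, the constant encoder yields u_{γ₀} = 0 almost surely (a non-informative equilibrium), and J(γ₀) = a²·σ_m² + b². -/

import Mathlib

open MeasureTheory ProbabilityTheory NNReal
open scoped ENNReal

section Aux

open Real Set

lemma aux_integrable_mul_of_memL2 {Ω : Type*} [MeasurableSpace Ω] {μ : Measure Ω} {f g : Ω → ℝ}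
    (hf : MemLp f 2 μ) (hg : MemLp g 2 μ) : Integrable (fun ω => f ω * g ω) μ := by
  have h : MemLp (f • g) 1 μ := hg.smul hf (hpqr := ⟨by simp [one_div, ENNReal.inv_two_add_inv_two]⟩)
  have := memLp_one_iff_integrable.mp h
  exact (by simpa [Pi.smul_apply, smul_eq_mul] using this : Integrable (f * g) μ)

lemma aux_memL2_condexp {Ω : Type*} {G F : MeasurableSpace Ω} {μ : Measure Ω}
    [IsProbabilityMeasure μ] (hG : G ≤ F) {f : Ω → ℝ}
    (hf : MemLp f 2 μ) : MemLp (μ[f|G]) 2 μ := by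
  set g := condExpL2 ℝ ℝ hG (hf.toLp f) with hg
  have hae : AEStronglyMeasurable[G] (g : Ω → ℝ) μ := aestronglyMeasurable_condExpL2 hG _
  have heq : (g : Ω → ℝ) =ᵐ[μ] μ[f|G] := by
    refine ae_eq_condExp_of_forall_setIntegral_eq hG
      (memLp_one_iff_integrable.mp (hf.mono_exponent one_le_two))
      (fun s _ _ => integrableOn_Lp_of_measure_ne_top _ fact_one_le_two_ennreal.elim
        (measure_ne_top μ s))
      (fun s hs _ => ?_) hae
    rw [integral_condExpL2_eq hG (hf.toLp f) hs (measure_ne_top μ s)]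
    exact setIntegral_congr_ae (hG s hs) ((hf.coeFn_toLp).mono fun x hx _ => hx)
  exact ((Lp.memLp (g : Lp ℝ 2 μ)).ae_eq heq : MemLp (μ[f|G]) 2 μ)

lemma aux_key {Ω : Type*} {G F : MeasurableSpace Ω} {μ : Measure Ω} [IsProbabilityMeasure μ]
    {m : Ω → ℝ} (hm2 : MemLp m 2 μ) (hmean : ∫ ω, m ω ∂μ = 0)
    (hG : G ≤ F) {a b : ℝ} (ha : a < 1 / 2) :
    ∫ ω, (a * m ω - b) ^ 2 ∂μ ≤ ∫ ω, (a * m ω - b - (μ[m|G]) ω) ^ 2 ∂μ := by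
  haveI : SigmaFinite (μ.trim hG) := inferInstance
  set u := μ[m|G] with hu
  have hu2 : MemLp u 2 μ := aux_memL2_condexp hG hm2
  have hmi : Integrable m μ := memLp_one_iff_integrable.mp (hm2.mono_exponent one_le_two)
  have hui : Integrable u μ := integrable_condExp
  have hmu : Integrable (fun ω => m ω * u ω) μ := aux_integrable_mul_of_memL2 hm2 hu2
  have huu : Integrable (fun ω => u ω * u ω) μ := aux_integrable_mul_of_memL2 hu2 hu2
  have hamb : MemLp (fun ω => a * m ω - b) 2 μ := (hm2.const_mul a).sub (memLp_const b)
  have hamb2 : Integrable (fun ω => (a * m ω - b) ^ 2) μ := hamb.integrable_sq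
  have hambu : Integrable (fun ω => (a * m ω - b) * u ω) μ :=
    aux_integrable_mul_of_memL2 hamb hu2
  have hintu : ∫ ω, u ω ∂μ = 0 := by rw [hu, integral_condExp hG, hmean]
  have hproj : ∫ ω, m ω * u ω ∂μ = ∫ ω, u ω * u ω ∂μ := by
    have hum : Integrable (u * m) μ := by
      have : (u * m) = (fun ω => m ω * u ω) := by funext ω; simp [mul_comm]
      rw [this]; exact hmu
    have h1 : μ[u * m|G] =ᵐ[μ] u * μ[m|G] :=
      condExp_mul_of_stronglyMeasurable_left stronglyMeasurable_condExp hum hmi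
    calc ∫ ω, m ω * u ω ∂μ = ∫ ω, (u * m) ω ∂μ := by
            refine integral_congr_ae (Filter.Eventually.of_forall fun ω => ?_)
            simp [mul_comm]
      _ = ∫ ω, (μ[u * m|G]) ω ∂μ := (integral_condExp hG).symm
      _ = ∫ ω, u ω * u ω ∂μ := by
            refine integral_congr_ae (h1.mono fun ω hω => ?_)
            simpa using hω
  have hexp : ∫ ω, (a * m ω - b - u ω) ^ 2 ∂μ
      = ∫ ω, (a * m ω - b) ^ 2 ∂μ - 2 * ∫ ω, (a * m ω - b) * u ω ∂μ
        + ∫ ω, u ω * u ω ∂μ := by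
    have hfun : (fun ω => (a * m ω - b - u ω) ^ 2)
        = fun ω => ((a * m ω - b) ^ 2 - 2 * ((a * m ω - b) * u ω)) + u ω * u ω := by
      funext ω; ring
    have hsub : Integrable (fun ω => (a * m ω - b) ^ 2 - 2 * ((a * m ω - b) * u ω)) μ :=
      hamb2.sub (hambu.const_mul 2)
    rw [hfun, integral_add hsub huu,
      integral_sub hamb2 (hambu.const_mul 2), integral_const_mul]
  have h3 : ∫ ω, (a * m ω - b) * u ω ∂μ = a * ∫ ω, u ω * u ω ∂μ := by
    have hfun : (fun ω => (a * m ω - b) * u ω)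
        = fun ω => a * (m ω * u ω) - b * u ω := by funext ω; ring
    rw [hfun, integral_sub (hmu.const_mul a) (hui.const_mul b), integral_const_mul,
      integral_const_mul, hproj, hintu, mul_zero, sub_zero]
  have h0 : 0 ≤ ∫ ω, u ω * u ω ∂μ := integral_nonneg fun ω => mul_self_nonneg _
  have h4 : 0 ≤ (1 - 2 * a) * ∫ ω, u ω * u ω ∂μ :=
    mul_nonneg (by linarith) h0
  rw [hexp, h3]
  nlinarith [h0, h4]

lemma aux_integral_x_exp (b : ℝ) : ∫ x : ℝ, x * rexp (-b * x ^ 2) = 0 := by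
  have h := integral_neg_eq_self (fun x : ℝ => x * rexp (-b * x ^ 2)) volume
  simp only [neg_sq, neg_mul] at h
  rw [integral_neg] at h
  simp only [neg_mul]
  linarith

lemma aux_integral_sq_exp {b : ℝ} (hb : 0 < b) :
    ∫ x : ℝ, x ^ 2 * rexp (-b * x ^ 2) = b ^ (-(3 : ℝ) / 2) * (Real.sqrt π / 2) := by
  have h1 : ∫ x : ℝ, x ^ 2 * rexp (-b * x ^ 2)
      = 2 * ∫ x in Ioi (0 : ℝ), x ^ 2 * rexp (-b * x ^ 2) := by
    rw [← integral_comp_abs (f := fun x => x ^ 2 * rexp (-b * x ^ 2))]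
    simp_rw [sq_abs]
  have h2 : ∫ x in Ioi (0 : ℝ), x ^ 2 * rexp (-b * x ^ 2)
      = ∫ x in Ioi (0 : ℝ), x ^ (2 : ℝ) * rexp (-b * x ^ (2 : ℝ)) := by
    refine setIntegral_congr_fun measurableSet_Ioi fun x _ => ?_
    rw [show ((2 : ℝ)) = ((2 : ℕ) : ℝ) by norm_num, Real.rpow_natCast]
  have hg : Real.Gamma (((2 : ℝ) + 1) / 2) = Real.sqrt π / 2 := by
    rw [show ((2 : ℝ) + 1) / 2 = 1 / 2 + 1 by norm_num,
      Real.Gamma_add_one (by norm_num), Real.Gamma_one_half_eq]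
    ring
  rw [h1, h2, integral_rpow_mul_exp_neg_mul_rpow two_pos (by norm_num) hb, hg,
    show (-((2 : ℝ) + 1) / 2) = (-(3 : ℝ) / 2) by norm_num]
  ring

lemma aux_pdf_eq {v : ℝ≥0} (hv : v ≠ 0) (x : ℝ) :
    gaussianPDFReal 0 v x
      = (Real.sqrt (2 * π * v))⁻¹ * rexp (-(2 * (v : ℝ))⁻¹ * x ^ 2) := by
  have hs : (0 : ℝ) < v := by exact_mod_cast pos_iff_ne_zero.mpr hv
  simp only [gaussianPDFReal, sub_zero]
  congr 1
  have h2v : (2 * (v : ℝ)) ≠ 0 := by positivity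
  field_simp

lemma aux_gaussianReal_integral_eq {v : ℝ≥0} (hv : v ≠ 0) (g : ℝ → ℝ) :
    ∫ x, g x ∂(gaussianReal 0 v) = ∫ x, gaussianPDFReal 0 v x * g x := by
  rw [gaussianReal_of_var_ne_zero 0 hv]
  have hmeas : Measurable fun x => (gaussianPDFReal 0 v x).toNNReal :=
    (measurable_gaussianPDFReal 0 v).real_toNNReal
  have hpdf : gaussianPDF 0 v = fun x => ((gaussianPDFReal 0 v x).toNNReal : ℝ≥0∞) := by
    funext x; rfl
  rw [hpdf, integral_withDensity_eq_integral_smul hmeas]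
  congr 1; funext x
  simp [NNReal.smul_def, Real.coe_toNNReal _ (gaussianPDFReal_nonneg 0 v x)]

lemma aux_gaussianReal_integrable_iff {v : ℝ≥0} (hv : v ≠ 0) (g : ℝ → ℝ) :
    Integrable g (gaussianReal 0 v)
      ↔ Integrable (fun x => gaussianPDFReal 0 v x * g x) volume := by
  rw [gaussianReal_of_var_ne_zero 0 hv]
  have hmeas : Measurable fun x => (gaussianPDFReal 0 v x).toNNReal :=
    (measurable_gaussianPDFReal 0 v).real_toNNReal
  have hpdf : gaussianPDF 0 v = fun x => ((gaussianPDFReal 0 v x).toNNReal : ℝ≥0∞) := by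
    funext x; rfl
  rw [hpdf, integrable_withDensity_iff_integrable_smul hmeas]
  constructor <;> intro h <;> refine h.congr (Filter.Eventually.of_forall fun x => ?_) <;>
    simp [NNReal.smul_def, Real.coe_toNNReal _ (gaussianPDFReal_nonneg 0 v x)]

lemma aux_integral_id_gaussianReal {v : ℝ≥0} (hv : v ≠ 0) :
    ∫ x, x ∂(gaussianReal 0 v) = 0 := by
  rw [aux_gaussianReal_integral_eq hv]
  have h : (fun x => gaussianPDFReal 0 v x * x)
      = fun x => (Real.sqrt (2 * π * v))⁻¹ * (x * rexp (-(2 * (v : ℝ))⁻¹ * x ^ 2)) := by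
    funext x; rw [aux_pdf_eq hv]; ring
  rw [h, integral_const_mul, aux_integral_x_exp, mul_zero]

lemma aux_integral_sq_gaussianReal {v : ℝ≥0} (hv : v ≠ 0) :
    ∫ x, x ^ 2 ∂(gaussianReal 0 v) = (v : ℝ) := by
  have hs : (0 : ℝ) < v := by exact_mod_cast pos_iff_ne_zero.mpr hv
  have hb : (0 : ℝ) < (2 * (v : ℝ))⁻¹ := by positivity
  rw [aux_gaussianReal_integral_eq hv]
  have h : (fun x => gaussianPDFReal 0 v x * x ^ 2)
      = fun x => (Real.sqrt (2 * π * v))⁻¹ * (x ^ 2 * rexp (-(2 * (v : ℝ))⁻¹ * x ^ 2)) := by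
    funext x; rw [aux_pdf_eq hv]; ring
  rw [h, integral_const_mul, aux_integral_sq_exp hb]
  have h2v : (0 : ℝ) < 2 * (v : ℝ) := by positivity
  have hrw : ((2 * (v : ℝ))⁻¹) ^ (-(3 : ℝ) / 2) = (2 * (v : ℝ)) ^ ((3 : ℝ) / 2) := by
    rw [show (-(3 : ℝ) / 2) = -((3 : ℝ) / 2) by norm_num,
      Real.rpow_neg (inv_nonneg.mpr h2v.le), Real.inv_rpow h2v.le, inv_inv]
  have h32 : (2 * (v : ℝ)) ^ ((3 : ℝ) / 2) = (2 * (v : ℝ)) * Real.sqrt (2 * (v : ℝ)) := by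
    rw [show ((3 : ℝ) / 2) = 1 + 1 / 2 by norm_num, Real.rpow_add h2v, Real.rpow_one,
      ← Real.sqrt_eq_rpow]
  have hsqrt : Real.sqrt (2 * π * (v : ℝ)) = Real.sqrt π * Real.sqrt (2 * (v : ℝ)) := by
    rw [show 2 * π * (v : ℝ) = π * (2 * (v : ℝ)) by ring, Real.sqrt_mul Real.pi_pos.le]
  rw [hrw, h32, hsqrt]
  have hπ : Real.sqrt π ≠ 0 := by positivity
  have h2vs : Real.sqrt (2 * (v : ℝ)) ≠ 0 := by positivity
  field_simp

lemma aux_memL2_gaussianReal {v : ℝ≥0} (hv : v ≠ 0) :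
    MemLp (id : ℝ → ℝ) 2 (gaussianReal 0 v) := by
  have hs : (0 : ℝ) < v := by exact_mod_cast pos_iff_ne_zero.mpr hv
  have hb : (0 : ℝ) < (2 * (v : ℝ))⁻¹ := by positivity
  refine (memLp_two_iff_integrable_sq aestronglyMeasurable_id).mpr ?_
  rw [show (fun x : ℝ => id x ^ 2) = fun x : ℝ => x ^ 2 from rfl]
  rw [aux_gaussianReal_integrable_iff hv]
  have h : (fun x => gaussianPDFReal 0 v x * x ^ 2)
      = fun x => (Real.sqrt (2 * π * v))⁻¹ * (x ^ 2 * rexp (-(2 * (v : ℝ))⁻¹ * x ^ 2)) := by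
    funext x; rw [aux_pdf_eq hv]; ring
  rw [h]
  have hint : Integrable (fun x : ℝ => x ^ (2 : ℝ) * rexp (-(2 * (v : ℝ))⁻¹ * x ^ 2)) volume :=
    integrable_rpow_mul_exp_neg_mul_sq hb (by norm_num)
  have hconv : (fun x : ℝ => x ^ (2 : ℝ) * rexp (-(2 * (v : ℝ))⁻¹ * x ^ 2))
      = fun x : ℝ => x ^ 2 * rexp (-(2 * (v : ℝ))⁻¹ * x ^ 2) := by
    funext x; rw [show ((2 : ℝ)) = ((2 : ℕ) : ℝ) by norm_num, Real.rpow_natCast]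
  rw [hconv] at hint
  exact hint.const_mul _

end Aux

/-- Scalar noiseless cheap talk with Gaussian source, case `a < 1/2`: the constant
encoder `γ₀ ≡ 0` is a Stackelberg equilibrium, it is non-informative (`u = 0` a.s.),
and its cost is `a²·σ_m² + b²`. -/
theorem stmt_3 {Ω : Type*} {F : MeasurableSpace Ω} {μ : Measure Ω} [IsProbabilityMeasure μ]
    (m : Ω → ℝ) (hm : Measurable m) (v : ℝ≥0) (hv : 0 < v)
    (hmap : μ.map m = gaussianReal 0 v) (a b : ℝ) (ha : a < 1 / 2) :
    (∀ γ : ℝ → ℝ, Measurable γ →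
      ∫ ω, (a * m ω - b -
          (μ[m | MeasurableSpace.comap (fun ω => (0 : ℝ)) inferInstance]) ω) ^ 2 ∂μ
        ≤ ∫ ω, (a * m ω - b -
            (μ[m | MeasurableSpace.comap (fun ω => γ (m ω)) inferInstance]) ω) ^ 2 ∂μ) ∧
    (μ[m | MeasurableSpace.comap (fun ω => (0 : ℝ)) inferInstance]) =ᵐ[μ] (fun _ => (0 : ℝ)) ∧
    ∫ ω, (a * m ω - b -
        (μ[m | MeasurableSpace.comap (fun ω => (0 : ℝ)) inferInstance]) ω) ^ 2 ∂μ
      = a ^ 2 * (v : ℝ) + b ^ 2 := by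
  have hvne : v ≠ 0 := hv.ne'
  have hm2 : MemLp m 2 μ := by
    have h := aux_memL2_gaussianReal hvne
    rw [← hmap] at h
    exact (memLp_map_measure_iff aestronglyMeasurable_id hm.aemeasurable).mp h
  have hmi : Integrable m μ := memLp_one_iff_integrable.mp (hm2.mono_exponent one_le_two)
  have hmean : ∫ ω, m ω ∂μ = 0 := by
    have h := aux_integral_id_gaussianReal hvne
    rw [← hmap,
      integral_map hm.aemeasurable
        (f := fun x : ℝ => x) measurable_id.aestronglyMeasurable] at h
    exact h
  have hsq : ∫ ω, (m ω) ^ 2 ∂μ = (v : ℝ) := by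
    have h := aux_integral_sq_gaussianReal hvne
    rw [← hmap,
      integral_map hm.aemeasurable
        (f := fun x : ℝ => x ^ 2) (measurable_id.pow_const 2).aestronglyMeasurable] at h
    exact h
  rw [MeasurableSpace.comap_const, condExp_bot]
  simp only [hmean]
  refine ⟨?_, ?_, ?_⟩
  · intro γ hγ
    simp only [sub_zero]
    exact aux_key hm2 hmean ((hγ.comp hm).comap_le) ha
  · exact Filter.EventuallyEq.rfl
  · simp only [sub_zero]
    have h1 : Integrable (fun ω => a ^ 2 * m ω ^ 2) μ := hm2.integrable_sq.const_mul _
    have h2 : Integrable (fun ω => 2 * a * b * m ω) μ := hmi.const_mul _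
    calc ∫ ω, (a * m ω - b) ^ 2 ∂μ
        = ∫ ω, (a ^ 2 * m ω ^ 2 - 2 * a * b * m ω + b ^ 2) ∂μ := by
          congr 1; funext ω; ring
      _ = (∫ ω, (a ^ 2 * m ω ^ 2 - 2 * a * b * m ω) ∂μ) + ∫ _ω, (b ^ 2 : ℝ) ∂μ := by
          have h12 : Integrable (fun ω => a ^ 2 * m ω ^ 2 - 2 * a * b * m ω) μ := h1.sub h2
          exact integral_add h12 (integrable_const _)
      _ = a ^ 2 * (v : ℝ) + b ^ 2 := by
          rw [integral_sub h1 h2, integral_const_mul, integral_const_mul, hsq, hmean,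
            integral_const, probReal_univ]
          simp
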